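/- arXiv:1603.09744 — 3 statements merged into one kernel-verified Lean document; each statement's English description precedes it below -/
import Mathlib

section
/- For every n ≥ 1 and k ≥ 0, the fundamental slide polynomials {𝔉_a : a a weak composition of length n with a_1+⋯+a_n = k} form a ℤ-basis of the ℤ-module of homogeneous polynomials of degree k in ℤ[x_1,…,x_n]. -/
open scoped Classical

namespace SlidePaper

/-- Sum of the first `i` entries of a weak composition of length `n`. -/
def psum {n : ℕ} (a : Fin n → ℕ) (i : ℕ) : ℕ :=
  ∑ j ∈ Finset.univ.filter (fun j : Fin n => (j : ℕ) < i), a j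

/-- `b` dominates `a`: all partial sums of `b` are at least those of `a`. -/
def Dominates {n : ℕ} (b a : Fin n → ℕ) : Prop :=
  ∀ i : Fin (n + 1), psum a i ≤ psum b i

/-- The flattening of a weak composition: the list of its nonzero entries in order. -/
def flat {n : ℕ} (a : Fin n → ℕ) : List ℕ :=
  (List.ofFn a).filter (fun x => x ≠ 0)

/-- `β` refines `α`: `β` splits into consecutive blocks with sums `α₁, α₂, …`. -/
def Refines (β α : List ℕ) : Prop :=
  ∃ L : List (List ℕ), L.flatten = β ∧ L.map List.sum = α

/-- All weak compositions of length `n` with entries at most `k`. -/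
def wcFinset (n k : ℕ) : Finset (Fin n → ℕ) :=
  Fintype.piFinset fun _ => Finset.range (k + 1)

/-- The monomial slide polynomial `𝔐_a`. -/
noncomputable def slideM {n : ℕ} (a : Fin n → ℕ) : MvPolynomial (Fin n) ℤ :=
  ∑ b ∈ (wcFinset n (∑ i, a i)).filter (fun b => Dominates b a ∧ flat b = flat a),
    MvPolynomial.monomial (Finsupp.equivFunOnFinite.symm b) 1

/-- The fundamental slide polynomial `𝔉_a`. -/
noncomputable def slideF {n : ℕ} (a : Fin n → ℕ) : MvPolynomial (Fin n) ℤ :=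
  ∑ b ∈ (wcFinset n (∑ i, a i)).filter (fun b => Dominates b a ∧ Refines (flat b) (flat a)),
    MvPolynomial.monomial (Finsupp.equivFunOnFinite.symm b) 1

/-- A weak composition is quasi-flat if its nonzero entries occupy consecutive positions. -/
def QuasiFlat {n : ℕ} (a : Fin n → ℕ) : Prop :=
  ∀ i j l : Fin n, i ≤ j → j ≤ l → a i ≠ 0 → a l ≠ 0 → a j ≠ 0

/-- `b` strongly dominates `a`. -/
def StronglyDominates {n : ℕ} (b a : Fin n → ℕ) : Prop :=
  Dominates b a ∧ ∀ c : Fin n → ℕ, Dominates c a → flat c = flat b → Dominates c b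

/-- The exponent vector placing the parts of `α` at the positions `i`. -/
noncomputable def placeExp {n : ℕ} (α : List ℕ) (i : Fin α.length → Fin n) : Fin n →₀ ℕ :=
  ∑ t : Fin α.length, Finsupp.single (i t) (α.get t)

/-- `f` is quasisymmetric in the variables `x_1, …, x_k` (0-indexed: `x_0, …, x_{k-1}`). -/
def IsQuasisymmetricIn {n : ℕ} (k : ℕ) (f : MvPolynomial (Fin n) ℤ) : Prop :=
  ∀ α : List ℕ, (∀ x ∈ α, 0 < x) →
    ∀ i j : Fin α.length → Fin n, StrictMono i → StrictMono j →
      (∀ t, (i t : ℕ) < k) → (∀ t, (j t : ℕ) < k) →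
      MvPolynomial.coeff (placeExp α i) f = MvPolynomial.coeff (placeExp α j) f

/-- The monomial quasisymmetric polynomial `M_α(x_1, …, x_k)` inside `ℤ[x_1, …, x_n]`. -/
noncomputable def Mqs (n k : ℕ) (α : List ℕ) : MvPolynomial (Fin n) ℤ :=
  ∑ i ∈ (Finset.univ : Finset (Fin α.length → Fin n)).filter
      (fun i : Fin α.length → Fin n => StrictMono i ∧ ∀ t, (i t : ℕ) < k),
    ∏ t : Fin α.length, (MvPolynomial.X (i t) : MvPolynomial (Fin n) ℤ) ^ α.get t

/-- The fundamental quasisymmetric polynomial `F_α(x_1, …, x_k)` inside `ℤ[x_1, …, x_n]`. -/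
noncomputable def Fqs (n k : ℕ) (α : List ℕ) : MvPolynomial (Fin n) ℤ :=
  ∑ c ∈ (Finset.univ : Finset (Composition α.sum)).filter
      (fun c => Refines c.blocks α ∧ c.blocks.length ≤ k),
    Mqs n k c.blocks

/-- Place the weak composition `a` (of length `N`) at offset `k` inside length `M`. -/
def shiftComp {N : ℕ} (k M : ℕ) (a : Fin N → ℕ) : Fin M → ℕ :=
  fun i => if h : k ≤ (i : ℕ) ∧ (i : ℕ) - k < N then a ⟨(i : ℕ) - k, h.2⟩ else 0

/-- Spread the values `g` to positions `ι` inside a weak composition of length `n`. -/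
def spread {l n : ℕ} (ι : Fin l → Fin n) (g : Fin l → ℕ) : Fin n → ℕ :=
  fun i => ∑ k, if ι k = i then g k else 0

/-- The monomial quasisymmetric function `M_α` in infinitely many variables. -/
noncomputable def MqsFun (α : List ℕ) : MvPowerSeries ℕ ℤ :=
  fun d => if ∃ i : Fin α.length → ℕ, StrictMono i ∧
      d = ∑ t : Fin α.length, Finsupp.single (i t) (α.get t) then 1 else 0

/-- The fundamental quasisymmetric function `F_α` in infinitely many variables. -/
noncomputable def FqsFun (α : List ℕ) : MvPowerSeries ℕ ℤ :=
  ∑ c ∈ (Finset.univ : Finset (Composition α.sum)).filter (fun c => Refines c.blocks α),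
    MqsFun c.blocks

/-- The cells of the Young diagram of `lam` (French notation): row `r` (from the
bottom, 0-indexed) has `lam.get r` cells. -/
abbrev Cells (lam : List ℕ) := Σ r : Fin lam.length, Fin (lam.get r)

/-- A filling of `lam` with entries in `{1, …, n}` (encoded as `Fin n`) is a semistandard
Young tableau: rows weakly increase left to right, columns strictly increase bottom to top. -/
def IsSSYT {n : ℕ} {lam : List ℕ} (T : Cells lam → Fin n) : Prop :=
  (∀ (r : Fin lam.length) (c c' : Fin (lam.get r)), c ≤ c' → T ⟨r, c⟩ ≤ T ⟨r, c'⟩) ∧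
  (∀ (r r' : Fin lam.length) (c' : Fin (lam.get r')) (h : (c' : ℕ) < lam.get r),
      (r : ℕ) < (r' : ℕ) → T ⟨r, ⟨c', h⟩⟩ < T ⟨r', c'⟩)

/-- The weight of a filling: the `v`-th entry counts the occurrences of the value `v`. -/
def wtT {n : ℕ} {lam : List ℕ} (T : Cells lam → Fin n) : Fin n → ℕ :=
  fun v => (Finset.univ.filter (fun x : Cells lam => T x = v)).card

/-- A filling is quasi-Yamanouchi if for every value `v > 1`, the leftmost occurrence of `v`
lies weakly left of some occurrence of `v - 1`. -/
def IsQY {n : ℕ} {lam : List ℕ} (T : Cells lam → Fin n) : Prop :=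
  ∀ (v : Fin n) (x : Cells lam), T x = v → 0 < (v : ℕ) →
    (∀ y : Cells lam, T y = v → (x.2 : ℕ) ≤ (y.2 : ℕ)) →
    ∃ z : Cells lam, (T z : ℕ) + 1 = (v : ℕ) ∧ (x.2 : ℕ) ≤ (z.2 : ℕ)

/-- The Schur polynomial `s_lam(x_1, …, x_n)` as the generating function of
semistandard Young tableaux. -/
noncomputable def schurPoly (n : ℕ) (lam : List ℕ) : MvPolynomial (Fin n) ℤ :=
  ∑ T ∈ (Finset.univ : Finset (Cells lam → Fin n)).filter (fun T => IsSSYT T),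
    MvPolynomial.monomial (Finsupp.equivFunOnFinite.symm (wtT T)) 1

/-- One destandardization step on fillings: for some value `v` occurring in `T` whose
leftmost occurrence is strictly right of every occurrence of `v - 1`, every `v` is
decremented to `v - 1`. -/
def TabStep {n : ℕ} {lam : List ℕ} (T T' : Cells lam → Fin n) : Prop :=
  ∃ v : Fin n, 0 < (v : ℕ) ∧ (∃ x, T x = v) ∧
    (∀ x y : Cells lam, T x = v → (T y : ℕ) + 1 = (v : ℕ) → (y.2 : ℕ) < (x.2 : ℕ)) ∧
    ∀ x : Cells lam, (T' x : ℕ) = if T x = v then (v : ℕ) - 1 else (T x : ℕ)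

/-- The reading word of a set of crosses: rows are read from top to bottom, each row from
left to right, the cross in (0-indexed) row `i` and column `j` recording the letter `i + j`
(representing the simple transposition swapping `i + j` and `i + j + 1` of `{0, 1, 2, …}`). -/
def readWord (P : Finset (ℕ × ℕ)) : List ℕ :=
  ((List.range (P.sup Prod.fst + 1)).reverse).flatMap
    (fun i => ((List.range (P.sup Prod.snd + 1)).filter (fun j => decide ((i, j) ∈ P))).map
      (fun j => i + j))

/-- The permutation `s_{i_ℓ} ⋯ s_{i_1}` associated to the word `(i_1, …, i_ℓ)`,
where `s_k` swaps `k` and `k + 1`. -/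
def wordPerm (l : List ℕ) : Equiv.Perm ℕ :=
  ((l.map (fun k => Equiv.swap k (k + 1))).reverse).prod

/-- A word is reduced if no shorter word has the same product. -/
def IsReducedWord (l : List ℕ) : Prop :=
  ∀ l' : List ℕ, wordPerm l' = wordPerm l → l.length ≤ l'.length

/-- `P` is a reduced pipe dream of shape `w`: the pipes trace out `w` and no two pipes
cross more than once, equivalently the reading word of `P` is a reduced word for `w`. -/
def IsPD (w : Equiv.Perm ℕ) (P : Finset (ℕ × ℕ)) : Prop :=
  wordPerm (readWord P) = w ∧ IsReducedWord (readWord P)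

/-- `P` is a quasi-Yamanouchi pipe dream of shape `w`: for every row, the westernmost cross
is in the first column or lies weakly west of some cross in the row above. -/
def IsQPD (w : Equiv.Perm ℕ) (P : Finset (ℕ × ℕ)) : Prop :=
  IsPD w P ∧ ∀ i j : ℕ, (i, j) ∈ P → (∀ j', (i, j') ∈ P → j ≤ j') →
    (j = 0 ∨ ∃ j', (i + 1, j') ∈ P ∧ j ≤ j')

/-- One destandardization step on pipe dreams: a row with no cross in the first column,
all of whose crosses lie strictly east of every cross in the row above, has all its
crosses moved one step northwest. -/
def PDStep (P P' : Finset (ℕ × ℕ)) : Prop :=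
  ∃ r : ℕ, (∃ j, (r, j) ∈ P) ∧ (r, 0) ∉ P ∧
    (∀ j j', (r, j) ∈ P → (r + 1, j') ∈ P → j' < j) ∧
    P' = P.filter (fun p => p.1 ≠ r) ∪
      (P.filter (fun p => p.1 = r)).image (fun p => (r + 1, p.2 - 1))

/-- The number of crosses of `P` in (0-indexed) row `i`. -/
def rowWt (P : Finset (ℕ × ℕ)) (i : ℕ) : ℕ := (P.filter (fun p => p.1 = i)).card

/-- The weight of a pipe dream, as a weak composition of length `n`. -/
def wtFin (n : ℕ) (P : Finset (ℕ × ℕ)) : Fin n → ℕ := fun i => rowWt P (i : ℕ)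

/-- The flattened weight of a pipe dream: the list of nonzero row counts, bottom row first. -/
def flatWt (P : Finset (ℕ × ℕ)) : List ℕ :=
  ((List.range (P.sup Prod.fst + 1)).map (rowWt P)).filter (fun x => x ≠ 0)

/-- The Schubert polynomial of `w` in the variables `x_1, …, x_n`, as the generating
function of reduced pipe dreams of shape `w`. -/
noncomputable def SchubertPoly (n : ℕ) (w : Equiv.Perm ℕ) : MvPolynomial (Fin n) ℤ :=
  ∑ᶠ P ∈ {P : Finset (ℕ × ℕ) | IsPD w P},
    MvPolynomial.monomial (Finsupp.equivFunOnFinite.symm (wtFin n P)) 1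

/-- The Lehmer code of `w` (0-indexed): `lehmer w i` counts `j > i` with `w j < w i`. -/
noncomputable def lehmer (w : Equiv.Perm ℕ) (i : ℕ) : ℕ :=
  Set.ncard {j : ℕ | i < j ∧ w j < w i}

/-- The Lehmer code of `w` as a weak composition of length `n`. -/
noncomputable def lehmerFin (n : ℕ) (w : Equiv.Perm ℕ) : Fin n → ℕ :=
  fun i => lehmer w (i : ℕ)

/-- The number of inversions of `w`. -/
noncomputable def invCount (w : Equiv.Perm ℕ) : ℕ :=
  Set.ncard {p : ℕ × ℕ | p.1 < p.2 ∧ w p.2 < w p.1}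

/-- The largest entry of the Lehmer code of `w`. -/
noncomputable def maxLehmer (w : Equiv.Perm ℕ) : ℕ :=
  sSup (Set.range (lehmer w))

/-- The (0-indexed) position of the first descent of `w`. -/
noncomputable def firstDescent (w : Equiv.Perm ℕ) : ℕ :=
  sInf {i : ℕ | w (i + 1) < w i}

/-- `δ(w) = 1` if every position attaining `max(L(w))` is at or before the first descent,
and `δ(w) = 0` otherwise. -/
noncomputable def delta (w : Equiv.Perm ℕ) : ℤ :=
  if ∀ i : ℕ, lehmer w i = maxLehmer w → i ≤ firstDescent w then 1 else 0

/-- `η(w) = inv(w) − max(L(w)) + δ(w) − min{i : w_i > w_{i+1}}`. -/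
noncomputable def eta (w : Equiv.Perm ℕ) : ℤ :=
  (invCount w : ℤ) - (maxLehmer w : ℤ) + delta w - ((firstDescent w : ℤ) + 1)

/-- The decomposition of a list into maximal strictly increasing runs. -/
def runsStrict : List ℕ → List (List ℕ)
  | [] => []
  | x :: rest =>
    match runsStrict rest, rest with
    | r :: rs, y :: _ => if x < y then (x :: r) :: rs else [x] :: r :: rs
    | _, _ => [[x]]

/-- The descent composition of a word: lengths of its maximal increasing runs, a new run
beginning whenever a letter is followed by a weakly smaller letter. -/
def desStrict (l : List ℕ) : List ℕ := (runsStrict l).map List.length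

/-- The decomposition of a list into maximal weakly increasing runs. -/
def runsWeak : List ℕ → List (List ℕ)
  | [] => []
  | x :: rest =>
    match runsWeak rest, rest with
    | r :: rs, y :: _ => if x ≤ y then (x :: r) :: rs else [x] :: r :: rs
    | _, _ => [[x]]

/-- The descent composition of a word: the lengths of its maximal weakly increasing runs. -/
def desComp (l : List ℕ) : List ℕ := (runsWeak l).map List.length

/-- The permutation `1^m × w`, fixing `0, …, m-1` and acting by `w` shifted by `m` above. -/
def shiftPerm (m : ℕ) (w : Equiv.Perm ℕ) : Equiv.Perm ℕ where
  toFun i := if i < m then i else w (i - m) + m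
  invFun i := if i < m then i else w.symm (i - m) + m
  left_inv i := by
    dsimp only
    by_cases h : i < m
    · simp [h]
    · have h2 : ¬ (w (i - m) + m < m) := by omega
      rw [if_neg h, if_neg h2, Nat.add_sub_cancel, Equiv.symm_apply_apply]
      omega
  right_inv i := by
    dsimp only
    by_cases h : i < m
    · simp [h]
    · have h2 : ¬ (w.symm (i - m) + m < m) := by omega
      rw [if_neg h, if_neg h2, Nat.add_sub_cancel, Equiv.apply_symm_apply]
      omega

/-- The quasi-shuffle product of two (strong) compositions, as a multiset of compositions. -/
def qShuffle : List ℕ → List ℕ → Multiset (List ℕ)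
  | [], β => {β}
  | α, [] => {α}
  | a :: α, b :: β =>
      ((qShuffle α (b :: β)).map (a :: ·)) + ((qShuffle (a :: α) β).map (b :: ·)) +
        ((qShuffle α β).map ((a + b) :: ·))
termination_by α β => α.length + β.length
decreasing_by all_goals (simp only [List.length_cons]; omega)

def shuffles : List ℕ → List ℕ → Multiset (List ℕ)
  | [], B => {B}
  | A, [] => {A}
  | x :: A, y :: B =>
      ((shuffles A (y :: B)).map (x :: ·)) + ((shuffles (x :: A) B).map (y :: ·))
termination_by A B => A.length + B.length
decreasing_by all_goals (simp only [List.length_cons]; omega)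

/-- The word `(2n-1)^{a_1} (2n-3)^{a_2} ⋯ 1^{a_n}` associated to a weak composition `a`. -/
def wordA {n : ℕ} (a : Fin n → ℕ) : List ℕ :=
  (List.ofFn (fun i : Fin n => List.replicate (a i) (2 * n - 2 * (i : ℕ) - 1))).flatten

/-- The word `(2n)^{b_1} (2n-2)^{b_2} ⋯ 2^{b_n}` associated to a weak composition `b`. -/
def wordB {n : ℕ} (b : Fin n → ℕ) : List ℕ :=
  (List.ofFn (fun i : Fin n => List.replicate (b i) (2 * n - 2 * (i : ℕ)))).flatten

/-- A list (padded with trailing zeros) dominates a weak composition of length `n`. -/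
def DominatesList {n : ℕ} (l : List ℕ) (a : Fin n → ℕ) : Prop :=
  ∀ i : Fin (n + 1), psum a (i : ℕ) ≤ ((l.take (i : ℕ)).sum)

/-- The number of letters of the `A`-word (the odd letters) in the `k`-th weakly
increasing run of `C`. -/
def runCountA (C : List ℕ) (k : Fin (runsWeak C).length) : ℕ :=
  (((runsWeak C).get k).filter (fun z => z % 2 = 1)).length

/-- The number of letters of the `B`-word (the even letters) in the `k`-th weakly
increasing run of `C`. -/
def runCountB (C : List ℕ) (k : Fin (runsWeak C).length) : ℕ :=
  (((runsWeak C).get k).filter (fun z => z % 2 = 0)).length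

/-- The length of the `k`-th weakly increasing run of `C`. -/
def runLen (C : List ℕ) (k : Fin (runsWeak C).length) : ℕ :=
  ((runsWeak C).get k).length

/-- `c = bump_{(a,b)}(C)`: the unique weak composition of length `n` obtained by inserting
zero parts into `Des(C)` so that the correspondingly placed `Des_A` and `Des_B` dominate
`a` and `b`, minimal in dominance order among all such insertions. -/
def IsBumpS {n : ℕ} (a b : Fin n → ℕ) (C : List ℕ) (c : Fin n → ℕ) : Prop :=
  ∃ ι : Fin (runsWeak C).length → Fin n, StrictMono ι ∧
    c = spread ι (runLen C) ∧
    Dominates (spread ι (runCountA C)) a ∧ Dominates (spread ι (runCountB C)) b ∧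
    ∀ ι' : Fin (runsWeak C).length → Fin n, StrictMono ι' →
      Dominates (spread ι' (runCountA C)) a → Dominates (spread ι' (runCountB C)) b →
      Dominates (spread ι' (runLen C)) c

/-- The multiplicity `[c ∣ a ⧢ b]` of `c` in the slide product of `a` and `b`: the number of
shuffles `C` of the words of `a` and `b` lying in the shuffle set `SS(a,b)` with
`bump_{(a,b)}(C) = c`. -/
noncomputable def slideMult {n : ℕ} (a b c : Fin n → ℕ) : ℕ :=
  Multiset.card ((shuffles (wordA a) (wordB b)).filter
    (fun C => DominatesList ((runsWeak C).map
        (fun r => (r.filter (fun z => z % 2 = 1)).length)) a ∧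
      DominatesList ((runsWeak C).map (fun r => (r.filter (fun z => z % 2 = 0)).length)) b ∧
      IsBumpS a b C c))

/-- Membership in the quasi-shuffle set `QSS(a,b)`: a pair `(γ_a, γ_b)` of weak compositions
of a common length at most `n` with `γ_a ≥ a`, `flat(γ_a) = flat(a)`, `γ_b ≥ b`,
`flat(γ_b) = flat(b)` (after padding with trailing zeros), and all entries of
`γ_a + γ_b` positive. -/
def InQSS {n : ℕ} (a b : Fin n → ℕ) (x : (l : ℕ) × (Fin l → ℕ) × (Fin l → ℕ)) : Prop :=
  x.1 ≤ n ∧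
  Dominates (shiftComp 0 n x.2.1) a ∧ flat x.2.1 = flat a ∧
  Dominates (shiftComp 0 n x.2.2) b ∧ flat x.2.2 = flat b ∧
  ∀ k : Fin x.1, 0 < x.2.1 k + x.2.2 k

/-- `c = bump_{(a,b)}(γ_a, γ_b)`: the unique weak composition `c` of length `n` with
`flat(c) = γ_a + γ_b` whose decomposition `c = c_a + c_b` satisfies `c_a ≥ a` and
`c_b ≥ b`, minimal in dominance order among all such compositions. -/
def IsBumpQ {n : ℕ} (a b : Fin n → ℕ) (x : (l : ℕ) × (Fin l → ℕ) × (Fin l → ℕ))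
    (c : Fin n → ℕ) : Prop :=
  ∃ ι : Fin x.1 → Fin n, StrictMono ι ∧
    c = spread ι (fun k => x.2.1 k + x.2.2 k) ∧
    Dominates (spread ι x.2.1) a ∧ Dominates (spread ι x.2.2) b ∧
    ∀ ι' : Fin x.1 → Fin n, StrictMono ι' →
      Dominates (spread ι' x.2.1) a → Dominates (spread ι' x.2.2) b →
      Dominates (spread ι' (fun k => x.2.1 k + x.2.2 k)) c

/-- The multiplicity `[c ∣ a ⧻ b]` of `c` in the quasi-slide product of `a` and `b`: the
number of pairs in the quasi-shuffle set `QSS(a,b)` whose bump is `c`. -/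
noncomputable def qsMult {n : ℕ} (a b c : Fin n → ℕ) : ℕ :=
  Nat.card {x : (l : ℕ) × (Fin l → ℕ) × (Fin l → ℕ) // InQSS a b x ∧ IsBumpQ a b x c}

/-- The Stanley symmetric function `S_w`. -/
noncomputable def StanleySym (w : Equiv.Perm ℕ) : MvPowerSeries ℕ ℤ :=
  ∑ᶠ l ∈ {l : List ℕ | wordPerm l = w ∧ IsReducedWord l}, FqsFun (desStrict l)

lemma psum_succ {n : ℕ} (a : Fin n → ℕ) (i : ℕ) (h : i < n) :
    psum a (i + 1) = psum a i + a ⟨i, h⟩ := by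
  unfold psum
  rw [show (Finset.univ.filter (fun j : Fin n => (j : ℕ) < i + 1))
      = insert ⟨i, h⟩ (Finset.univ.filter (fun j : Fin n => (j : ℕ) < i)) by
    ext j; simp [Fin.ext_iff]; omega]
  rw [Finset.sum_insert (by simp)]
  ring

lemma dominates_refl {n : ℕ} (a : Fin n → ℕ) : Dominates a a := fun _ => le_rfl

lemma eq_of_psum_eq {n : ℕ} {a b : Fin n → ℕ}
    (key : ∀ i : ℕ, i ≤ n → psum a i = psum b i) : a = b := by
  funext j
  have e2 := key (j + 1) (by omega)
  have e1 := key j (by omega)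
  rw [psum_succ a j j.isLt, psum_succ b j j.isLt] at e2
  simp only [Fin.eta] at e2
  omega

lemma psum_top {n : ℕ} (a : Fin n → ℕ) : psum a n = ∑ i, a i := by
  unfold psum; congr 1; ext j; simp [j.isLt]

lemma flat_sum {n : ℕ} (a : Fin n → ℕ) : (flat a).sum = ∑ i, a i := by
  unfold flat
  rw [← List.sum_ofFn]
  generalize List.ofFn a = l
  induction l with
  | nil => simp
  | cons x t ih => by_cases hx : x = 0 <;> simp [hx, ne_eq, ih.symm]

lemma refines_refl (α : List ℕ) : Refines α α := by
  refine ⟨α.map (fun x => [x]), ?_, ?_⟩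
  · induction α with
    | nil => simp
    | cons x t ih => simp_all
  · simp [Function.comp_def]

lemma refines_sum {β α : List ℕ} (h : Refines β α) : β.sum = α.sum := by
  obtain ⟨L, hf, hm⟩ := h
  rw [← hf, ← hm]
  simp [List.sum_flatten]

/-- the rank function used for triangularity -/
def rank {n : ℕ} (a : Fin n → ℕ) : ℕ := ∑ i ∈ Finset.range (n + 1), psum a i

lemma rank_le_of_dominates {n : ℕ} {a b : Fin n → ℕ} (h : Dominates b a) :
    rank a ≤ rank b :=
  Finset.sum_le_sum fun i hi => h ⟨i, Finset.mem_range.mp hi⟩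

lemma eq_of_dominates_rank_eq {n : ℕ} {a b : Fin n → ℕ} (h : Dominates b a)
    (hr : rank a = rank b) : a = b := by
  apply eq_of_psum_eq
  intro i hi
  have := (Finset.sum_eq_sum_iff_of_le
    (fun i hi => h ⟨i, Finset.mem_range.mp hi⟩)).mp hr
  exact this i (Finset.mem_range.mpr (by omega))

section Fixed

variable (n k : ℕ)

abbrev SS := {a : Fin n → ℕ // ∑ i, a i = k}

noncomputable instance : Fintype (SS n k) := by
  apply Fintype.subtype ((wcFinset n k).filter (fun a => ∑ i, a i = k))
  intro a
  simp only [Finset.mem_filter, wcFinset, Fintype.mem_piFinset, Finset.mem_range]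
  constructor
  · exact fun h => h.2
  · intro h
    refine ⟨fun i => ?_, h⟩
    have := Finset.single_le_sum (f := a) (fun i _ => Nat.zero_le _)
      (Finset.mem_univ i)
    omega

/-- the monomial family in the homogeneous submodule -/
noncomputable def monoE (a : SS n k) :
    MvPolynomial.homogeneousSubmodule (Fin n) ℤ k :=
  ⟨MvPolynomial.monomial (Finsupp.equivFunOnFinite.symm a.1) 1, by
    rw [MvPolynomial.mem_homogeneousSubmodule]
    apply MvPolynomial.isHomogeneous_monomial
    rw [Finsupp.degree_apply, Finset.sum_subset (Finset.subset_univ _)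
      (fun x _ hx => by simpa using Finsupp.notMem_support_iff.mp hx)]
    exact a.2⟩

lemma degree_eq_sum (d : Fin n →₀ ℕ) : d.degree = ∑ i, d i := by
  rw [Finsupp.degree_apply, Finset.sum_subset (Finset.subset_univ _)]
  intro x _ hx
  simpa using Finsupp.notMem_support_iff.mp hx

lemma monoE_li : LinearIndependent ℤ (monoE n k) := by
  rw [Fintype.linearIndependent_iff]
  intro g hg b
  have hg' : (↑(∑ i, g i • monoE n k i) : MvPolynomial (Fin n) ℤ) = 0 := by
    rw [hg]; rfl
  push_cast [monoE] at hg'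
  have := congrArg (MvPolynomial.coeff (Finsupp.equivFunOnFinite.symm b.1)) hg'
  rw [MvPolynomial.coeff_sum] at this
  simp only [MvPolynomial.coeff_smul, MvPolynomial.coeff_monomial] at this
  rw [Finset.sum_eq_single b] at this
  · simpa using this
  · intro c _ hcb
    rw [if_neg, smul_zero]
    intro hcontra
    exact hcb (Subtype.ext (Finsupp.equivFunOnFinite.symm.injective hcontra))
  · simp

lemma monoE_span : ⊤ ≤ Submodule.span ℤ (Set.range (monoE n k)) := by
  rintro ⟨x, hx⟩ -
  rw [MvPolynomial.mem_homogeneousSubmodule] at hx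
  have hsum : ∀ d ∈ x.support, ∑ i, d i = k := by
    intro d hd
    rw [← degree_eq_sum, Finsupp.degree_eq_weight_one]
    exact hx (MvPolynomial.mem_support_iff.mp hd)
  classical
  have hrepr : (⟨x, by rw [MvPolynomial.mem_homogeneousSubmodule]; exact hx⟩ :
      MvPolynomial.homogeneousSubmodule (Fin n) ℤ k) =
      ∑ d ∈ x.support, (if h : ∑ i, d i = k then
        (MvPolynomial.coeff d x) • monoE n k ⟨Finsupp.equivFunOnFinite d, h⟩ else 0) := by
    apply Subtype.ext
    push_cast
    conv_lhs => rw [← MvPolynomial.support_sum_monomial_coeff x]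
    apply Finset.sum_congr rfl
    intro d hd
    rw [dif_pos (hsum d hd)]
    simp [monoE, MvPolynomial.smul_monomial]
  rw [hrepr]
  apply Submodule.sum_mem
  intro d _
  split
  · exact Submodule.smul_mem _ _ (Submodule.subset_span ⟨_, rfl⟩)
  · exact Submodule.zero_mem _

noncomputable def monoBasis : Module.Basis (SS n k) ℤ
    (MvPolynomial.homogeneousSubmodule (Fin n) ℤ k) :=
  Module.Basis.mk (monoE_li n k) (monoE_span n k)

/-- the transition matrix -/
noncomputable def TM : Matrix (SS n k) (SS n k) ℤ := fun b a =>
  if Dominates b.1 a.1 ∧ Refines (flat b.1) (flat a.1) then 1 else 0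

lemma TM_diag (a : SS n k) : TM n k a a = 1 := by
  rw [TM, if_pos ⟨dominates_refl _, refines_refl _⟩]

lemma TM_rank {a b : SS n k} (h : TM n k b a ≠ 0) : Dominates b.1 a.1 := by
  rw [TM] at h
  by_cases hc : Dominates b.1 a.1 ∧ Refines (flat b.1) (flat a.1)
  · exact hc.1
  · simp [if_neg hc] at h

lemma TM_det : (TM n k).det = 1 := by
  have htri : (TM n k).BlockTriangular (fun a => OrderDual.toDual (rank a.1)) := by
    intro i j hlt
    by_contra h
    exact absurd (rank_le_of_dominates (TM_rank n k h)) (not_le.mpr hlt)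
  rw [htri.det]
  apply Finset.prod_eq_one
  intro v _
  have : (TM n k).toSquareBlock (fun a => OrderDual.toDual (rank a.1)) v = 1 := by
    ext i j
    by_cases hij : i = j
    · subst hij
      simp [Matrix.toSquareBlock_def, TM_diag, Matrix.one_apply]
    · rw [Matrix.one_apply_ne hij, Matrix.toSquareBlock_def]
      by_contra h
      have hd : Dominates (i.1 : Fin n → ℕ) j.1.1 := TM_rank n k h
      have hr : rank (j.1 : Fin n → ℕ) = rank (i.1 : Fin n → ℕ) :=
        (OrderDual.toDual.injective (i.2.trans j.2.symm)).symm
      exact hij (Subtype.ext (Subtype.ext (eq_of_dominates_rank_eq hd hr).symm))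
  rw [this, Matrix.det_one]

end Fixed

/-- the fundamental slide polynomials indexed by weak compositions of length
`n` and size `k` form a `ℤ`-basis of the homogeneous polynomials of degree `k`. -/
theorem fundamentalSlide_basis (n k : ℕ) (hn : 1 ≤ n) :
    ∃ B : Module.Basis {a : Fin n → ℕ // ∑ i, a i = k} ℤ
        (MvPolynomial.homogeneousSubmodule (Fin n) ℤ k),
      ∀ a : {a : Fin n → ℕ // ∑ i, a i = k},
        (B a : MvPolynomial (Fin n) ℤ) = slideF a.val := by
  classical
  have hdet : IsUnit (TM n k).det := by rw [TM_det]; exact isUnit_one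
  refine ⟨(monoBasis n k).map (Matrix.toLinearEquiv (monoBasis n k) (TM n k) hdet), ?_⟩
  intro a
  have h1 : ((monoBasis n k).map (Matrix.toLinearEquiv (monoBasis n k) (TM n k) hdet)) a
      = ∑ j, TM n k j a • monoE n k j := by
    rw [Module.Basis.map_apply, Matrix.toLinearEquiv_apply, Matrix.toLin_self]
    simp [monoBasis, Module.Basis.mk_apply]
  rw [h1]
  push_cast
  -- now both sides are in MvPolynomial
  have hsum_a : ∑ i, a.1 i = k := a.2
  -- rewrite RHS (slideF)
  have hmemF : ∀ b : Fin n → ℕ,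
      b ∈ (wcFinset n (∑ i, a.1 i)).filter
        (fun b => Dominates b a.1 ∧ Refines (flat b) (flat a.1)) ↔
      (∑ i, b i = k ∧ Dominates b a.1 ∧ Refines (flat b) (flat a.1)) := by
    intro b
    simp only [Finset.mem_filter, wcFinset, Fintype.mem_piFinset, Finset.mem_range]
    constructor
    · rintro ⟨-, hd, hr⟩
      refine ⟨?_, hd, hr⟩
      rw [← flat_sum, refines_sum hr, flat_sum, hsum_a]
    · rintro ⟨hs, hd, hr⟩
      refine ⟨fun i => ?_, hd, hr⟩
      have := Finset.single_le_sum (f := b) (fun i _ => Nat.zero_le _) (Finset.mem_univ i)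
      omega
  have himg : (wcFinset n (∑ i, a.1 i)).filter
        (fun b => Dominates b a.1 ∧ Refines (flat b) (flat a.1))
      = (Finset.univ.filter (fun j : SS n k =>
          Dominates j.1 a.1 ∧ Refines (flat j.1) (flat a.1))).image Subtype.val := by
    ext b
    rw [hmemF]
    simp only [Finset.mem_image, Finset.mem_filter, Finset.mem_univ, true_and]
    constructor
    · rintro ⟨hs, hd, hr⟩
      exact ⟨⟨b, hs⟩, ⟨hd, hr⟩, rfl⟩
    · rintro ⟨j, ⟨hd, hr⟩, rfl⟩
      exact ⟨j.2, hd, hr⟩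
  rw [slideF, himg, Finset.sum_image (fun x _ y _ h => Subtype.ext h)]
  rw [Finset.sum_filter]
  apply Finset.sum_congr rfl
  intro j _
  by_cases hP : Dominates j.1 a.1 ∧ Refines (flat j.1) (flat a.1)
  · rw [TM, if_pos hP, if_pos hP, one_smul]
    rfl
  · rw [TM, if_neg hP, if_neg hP, zero_smul]

end SlidePaper
end

section
/- The destandardization map dst on semistandard Young tableaux is well-defined (the process terminates in a semistandard Young tableau) and satisfies: (1) for every T ∈ SSYT_n(λ), dst(T) ∈ QYT_n(λ); (2) for T ∈ SSYT_n(λ), dst(T) = T if and only if T ∈ QYT_n(λ); (3) dst : SSYT_n(λ) → QYT_n(λ) is surjective; and (4) dst : SSYT_n(λ) → QYT_n(λ) is injective if and only if n ≤ ℓ(λ), where ℓ(λ) is the number of parts of λ. -/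
open scoped Classical

namespace SlidePaper

section Dst
variable {n : ℕ} {lam : List ℕ}

noncomputable def sumT (T : Cells lam → Fin n) : ℕ := ∑ x, (T x : ℕ)

lemma tabStep_lt {T T' : Cells lam → Fin n} (h : TabStep T T') : sumT T' < sumT T := by
  obtain ⟨v, hv0, ⟨x0, hx0⟩, hleft, hspec⟩ := h
  refine Finset.sum_lt_sum (fun x _ => ?_) ⟨x0, Finset.mem_univ _, ?_⟩
  · rw [hspec x]; split_ifs with h
    · rw [h]; omega
    · exact le_rfl
  · rw [hspec x0, if_pos hx0, hx0]; omega

lemma mk_step {T : Cells lam → Fin n} (v : Fin n) (hv0 : 0 < (v : ℕ))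
    (hocc : ∃ x, T x = v)
    (hcond : ∀ x y : Cells lam, T x = v → (T y : ℕ) + 1 = (v : ℕ) → (y.2 : ℕ) < (x.2 : ℕ)) :
    ∃ U : Cells lam → Fin n, TabStep T U := by
  refine ⟨fun x => if T x = v then ⟨(v : ℕ) - 1, by omega⟩ else T x,
    v, hv0, hocc, hcond, fun x => ?_⟩
  split_ifs with h <;> simp [h]

noncomputable def dstAux (T : Cells lam → Fin n) : Cells lam → Fin n :=
  if h : ∃ U, TabStep T U then dstAux h.choose else T
termination_by sumT T
decreasing_by exact tabStep_lt h.choose_spec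

lemma dst_reaches (T : Cells lam → Fin n) :
    Relation.ReflTransGen TabStep T (dstAux T) := by
  rw [dstAux]
  split_ifs with h
  · exact Relation.ReflTransGen.head h.choose_spec (dst_reaches h.choose)
  · exact Relation.ReflTransGen.refl
termination_by sumT T
decreasing_by exact tabStep_lt h.choose_spec

lemma dst_normal (T : Cells lam → Fin n) : ¬ ∃ U, TabStep (dstAux T) U := by
  rw [dstAux]
  split_ifs with h
  · exact dst_normal h.choose
  · exact h
termination_by sumT T
decreasing_by exact tabStep_lt h.choose_spec

end Dst
section Key
variable {n : ℕ} {lam : List ℕ}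

def keyLt (T : Cells lam → Fin n) (x y : Cells lam) : Prop :=
  (T x : ℕ) < (T y : ℕ) ∨ ((T x : ℕ) = (T y : ℕ) ∧ (x.2 : ℕ) < (y.2 : ℕ))

lemma keyLt_irrefl (T : Cells lam → Fin n) (x : Cells lam) : ¬ keyLt T x x := by
  unfold keyLt; omega

lemma keyLt_trans {T : Cells lam → Fin n} {x y z : Cells lam}
    (h1 : keyLt T x y) (h2 : keyLt T y z) : keyLt T x z := by
  unfold keyLt at *; omega

lemma tabStep_keyLt {T T' : Cells lam → Fin n} (h : TabStep T T') (x y : Cells lam) :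
    keyLt T' x y ↔ keyLt T x y := by
  obtain ⟨v, hv0, -, hleft, hspec⟩ := h
  have hx := hspec x
  have hy := hspec y
  unfold keyLt
  by_cases hxv : T x = v <;> by_cases hyv : T y = v <;>
    simp only [hxv, hyv, if_pos, if_neg, if_true, if_false] at hx hy
  · rw [hx, hy]; omega
  · -- T x = v, T y ≠ v
    rw [hx, hy, hxv]
    have hvy : (T y : ℕ) ≠ (v : ℕ) := fun hh => hyv (Fin.ext hh)
    by_cases hy1 : (T y : ℕ) + 1 = (v : ℕ)
    · have := hleft x y hxv hy1; omega
    · omega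
  · -- T x ≠ v, T y = v
    rw [hx, hy, hyv]
    have hvx : (T x : ℕ) ≠ (v : ℕ) := fun hh => hxv (Fin.ext hh)
    by_cases hx1 : (T x : ℕ) + 1 = (v : ℕ)
    · have := hleft y x hyv hx1; omega
    · omega
  · rw [hx, hy]

lemma rtg_keyLt {T U : Cells lam → Fin n} (h : Relation.ReflTransGen TabStep T U)
    (x y : Cells lam) : keyLt U x y ↔ keyLt T x y := by
  induction h with
  | refl => rfl
  | tail _ hstep ih => rw [tabStep_keyLt hstep x y, ih]

lemma keyLt_total (hsort : List.Pairwise (· ≥ ·) lam) {T : Cells lam → Fin n}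
    (hT : IsSSYT T) {x y : Cells lam} (hne : x ≠ y) : keyLt T x y ∨ keyLt T y x := by
  unfold keyLt
  rcases Nat.lt_trichotomy (T x : ℕ) (T y : ℕ) with h | h | h
  · exact Or.inl (Or.inl h)
  · rcases Nat.lt_trichotomy (x.2 : ℕ) (y.2 : ℕ) with hc | hc | hc
    · exact Or.inl (Or.inr ⟨h, hc⟩)
    · -- same value, same column: contradiction
      exfalso
      have hr : (x.1 : ℕ) ≠ (y.1 : ℕ) := by
        intro hr
        apply hne
        have hr' : x.1 = y.1 := Fin.ext hr
        obtain ⟨x1, x2⟩ := x; obtain ⟨y1, y2⟩ := y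
        subst hr'
        simp only [Sigma.mk.inj_iff, heq_eq_eq]
        exact ⟨trivial, Fin.ext hc⟩
      have key : ∀ a b : Cells lam, (a.1 : ℕ) < (b.1 : ℕ) → (a.2 : ℕ) = (b.2 : ℕ) →
          (T a : ℕ) < (T b : ℕ) := by
        intro a b hab hcc
        have hlen : lam.get b.1 ≤ lam.get a.1 :=
          List.Pairwise.rel_get_of_lt hsort (by exact_mod_cast hab)
        have hlt : ((b.2 : ℕ) : ℕ) < lam.get a.1 := lt_of_lt_of_le b.2.isLt hlen
        have := hT.2 a.1 b.1 b.2 hlt hab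
        have ha : (⟨a.1, ⟨(b.2 : ℕ), hlt⟩⟩ : Cells lam) = a := by
          obtain ⟨a1, a2⟩ := a
          simp only [Sigma.mk.inj_iff, heq_eq_eq]
          exact ⟨trivial, Fin.ext hcc.symm⟩
        rw [ha] at this
        have hb : (⟨b.1, b.2⟩ : Cells lam) = b := rfl
        exact this
      rcases Nat.lt_trichotomy (x.1 : ℕ) (y.1 : ℕ) with hh | hh | hh
      · exact absurd h (Nat.ne_of_lt (key x y hh hc))
      · exact hr hh
      · exact absurd h.symm (Nat.ne_of_lt (key y x hh hc.symm))
    · exact Or.inr (Or.inr ⟨h.symm, hc⟩)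
  · exact Or.inr (Or.inl h)

end Key

section Main
variable {n : ℕ} {lam : List ℕ}

lemma tabStep_ssyt {T T' : Cells lam → Fin n} (hT : IsSSYT T) (h : TabStep T T') :
    IsSSYT T' := by
  obtain ⟨v, hv0, hocc, hleft, hspec⟩ := h
  constructor
  · intro r c c' hcc
    have hle : (T ⟨r, c⟩ : ℕ) ≤ (T ⟨r, c'⟩ : ℕ) := hT.1 r c c' hcc
    rw [Fin.le_def, hspec ⟨r, c⟩, hspec ⟨r, c'⟩]
    by_cases h1 : T ⟨r, c⟩ = v <;> by_cases h2 : T ⟨r, c'⟩ = v <;>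
      simp only [h1, h2, if_true, if_false, if_pos, if_neg]
    · omega
    · have : (T ⟨r, c⟩ : ℕ) = (v : ℕ) := by rw [h1]
      omega
    · have : (T ⟨r, c'⟩ : ℕ) = (v : ℕ) := by rw [h2]
      omega
    · omega
  · intro r r' c' hc hrr
    have hlt : (T ⟨r, ⟨c', hc⟩⟩ : ℕ) < (T ⟨r', c'⟩ : ℕ) := hT.2 r r' c' hc hrr
    rw [Fin.lt_def, hspec ⟨r, ⟨c', hc⟩⟩, hspec ⟨r', c'⟩]
    by_cases h1 : T ⟨r, ⟨c', hc⟩⟩ = v <;> by_cases h2 : T ⟨r', c'⟩ = v <;>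
      simp only [h1, h2, if_true, if_false, if_pos, if_neg]
    · omega
    · have : (T ⟨r, ⟨c', hc⟩⟩ : ℕ) = (v : ℕ) := by rw [h1]
      omega
    · -- the subtle case: entry below has value v - 1?
      have hvy : (T ⟨r', c'⟩ : ℕ) = (v : ℕ) := by rw [h2]
      by_cases h3 : (T ⟨r, ⟨c', hc⟩⟩ : ℕ) + 1 = (v : ℕ)
      · have := hleft ⟨r', c'⟩ ⟨r, ⟨c', hc⟩⟩ h2 h3
        simp at this
      · omega
    · omega

lemma reach_ssyt {T U : Cells lam → Fin n} (hT : IsSSYT T)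
    (h : Relation.ReflTransGen TabStep T U) : IsSSYT U := by
  induction h with
  | refl => exact hT
  | tail _ hstep ih => exact tabStep_ssyt ih hstep

lemma normal_iff_qy {T : Cells lam → Fin n} : (¬ ∃ U, TabStep T U) ↔ IsQY T := by
  constructor
  · intro hn v x hx hv0 hleft
    by_contra hz
    push_neg at hz
    apply hn
    refine mk_step v hv0 ⟨x, hx⟩ ?_
    intro z w hz' hw
    calc (w.2 : ℕ) < (x.2 : ℕ) := by
          have := hz w hw; omega
    _ ≤ (z.2 : ℕ) := hleft z hz'
  · rintro hqy ⟨U, v, hv0, ⟨x0, hx0⟩, hcond, -⟩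
    obtain ⟨x, hxmem, hxmin⟩ := Finset.exists_min_image
      (Finset.univ.filter (fun y : Cells lam => T y = v)) (fun y => (y.2 : ℕ))
      ⟨x0, by simp [hx0]⟩
    simp only [Finset.mem_filter, Finset.mem_univ, true_and] at hxmem
    obtain ⟨z, hz1, hz2⟩ := hqy v x hxmem hv0
      (fun y hy => hxmin y (by simp [hy]))
    exact absurd (hcond x z hxmem hz1) (by omega)

lemma normal_val_min {T : Cells lam → Fin n} (hTn : ¬ ∃ U, TabStep T U)
    {x : Cells lam} (hmin : ∀ y, ¬ keyLt T y x) : (T x : ℕ) = 0 := by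
  by_contra hv
  apply hTn
  refine mk_step (T x) (by omega) ⟨x, rfl⟩ ?_
  intro z w hz hw
  exact absurd (Or.inl (by omega) : keyLt T w x) (hmin w)

lemma normal_val_succ (hsort : List.Pairwise (· ≥ ·) lam) {T : Cells lam → Fin n}
    (hT : IsSSYT T) (hTn : ¬ ∃ U, TabStep T U)
    {x p : Cells lam} (hpx : keyLt T p x)
    (hmax : ∀ q, keyLt T p q → keyLt T q x → False) :
    (T x : ℕ) = (T p : ℕ) + (if (x.2 : ℕ) ≤ (p.2 : ℕ) then 1 else 0) := by
  have hple : (T p : ℕ) ≤ (T x : ℕ) := by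
    rcases hpx with h | ⟨h, -⟩ <;> omega
  have hva1 : (T x : ℕ) ≤ (T p : ℕ) + 1 := by
    by_contra hv
    push_neg at hv
    apply hTn
    refine mk_step (T x) (by omega) ⟨x, rfl⟩ ?_
    intro z w hz hw
    exact (hmax w (Or.inl (by omega)) (Or.inl (by omega))).elim
  split_ifs with hcol
  · -- col x ≤ col p forces a strict increase
    rcases hpx with h | ⟨h1, h2⟩
    · omega
    · omega
  · push_neg at hcol
    rcases hpx with h | ⟨h1, -⟩
    · -- T p < T x would contradict normality
      exfalso
      apply hTn
      refine mk_step (T x) (by omega) ⟨x, rfl⟩ ?_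
      intro z w hz hw
      have hzx : (T z : ℕ) = (T x : ℕ) := by rw [hz]
      have hwp : (w.2 : ℕ) ≤ (p.2 : ℕ) := by
        by_cases hwe : w = p
        · rw [hwe]
        · rcases keyLt_total hsort hT hwe with hk | hk
          · rcases hk with hk | ⟨-, hk⟩
            · omega
            · exact le_of_lt hk
          · exact (hmax w hk (Or.inl (by omega))).elim
      have hxz : (x.2 : ℕ) ≤ (z.2 : ℕ) := by
        by_cases hze : z = x
        · rw [hze]
        · rcases keyLt_total hsort hT hze with hk | hk
          · exact (hmax z (Or.inl (by omega)) hk).elim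
          · rcases hk with hk | ⟨-, hk⟩
            · omega
            · exact le_of_lt hk
      omega
    · omega

lemma normal_unique (hsort : List.Pairwise (· ≥ ·) lam) {U W : Cells lam → Fin n}
    (hU : IsSSYT U) (hW : IsSSYT W)
    (hUn : ¬ ∃ V, TabStep U V) (hWn : ¬ ∃ V, TabStep W V)
    (hkey : ∀ x y, keyLt U x y ↔ keyLt W x y) : U = W := by
  classical
  set rk : Cells lam → ℕ :=
    fun x => (Finset.univ.filter (fun y => keyLt U y x)).card with hrkdef
  have hrk_lt : ∀ {y x : Cells lam}, keyLt U y x → rk y < rk x := by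
    intro y x h
    apply Finset.card_lt_card
    constructor
    · intro w hw
      simp only [Finset.mem_filter, Finset.mem_univ, true_and] at *
      exact keyLt_trans hw h
    · intro hsub
      have hy : y ∈ Finset.univ.filter (fun w => keyLt U w x) := by
        simp only [Finset.mem_filter, Finset.mem_univ, true_and]; exact h
      have := hsub hy
      simp only [Finset.mem_filter, Finset.mem_univ, true_and] at this
      exact keyLt_irrefl U y this
  have main : ∀ k : ℕ, ∀ x : Cells lam, rk x < k → U x = W x := by
    intro k
    induction k with
    | zero => intro x hx; omega
    | succ k ih =>
      intro x hx
      by_cases hP : (Finset.univ.filter (fun y => keyLt U y x)).Nonempty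
      · obtain ⟨p, hpP, hpmax⟩ := Finset.exists_max_image _ rk hP
        simp only [Finset.mem_filter, Finset.mem_univ, true_and] at hpP
        have hmaxU : ∀ q, keyLt U p q → keyLt U q x → False := by
          intro q h1 h2
          have hq : q ∈ Finset.univ.filter (fun y => keyLt U y x) := by
            simp only [Finset.mem_filter, Finset.mem_univ, true_and]; exact h2
          have := hpmax q hq
          have := hrk_lt h1
          omega
        have hmaxW : ∀ q, keyLt W p q → keyLt W q x → False := fun q h1 h2 =>
          hmaxU q ((hkey _ _).mpr h1) ((hkey _ _).mpr h2)
        have h1 := normal_val_succ hsort hU hUn hpP hmaxU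
        have h2 := normal_val_succ hsort hW hWn ((hkey _ _).mp hpP) hmaxW
        have hIH : U p = W p := by
          refine ih p ?_
          have := hrk_lt hpP
          omega
        exact Fin.ext (by rw [h1, h2, hIH])
      · rw [Finset.not_nonempty_iff_eq_empty] at hP
        have hminU : ∀ y, ¬ keyLt U y x := by
          intro y hy
          have : y ∈ Finset.univ.filter (fun z => keyLt U z x) := by
            simp only [Finset.mem_filter, Finset.mem_univ, true_and]; exact hy
          rw [hP] at this
          exact absurd this (Finset.notMem_empty y)
        have hminW : ∀ y, ¬ keyLt W y x := fun y hy => hminU y ((hkey _ _).mpr hy)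
        exact Fin.ext (by rw [normal_val_min hUn hminU, normal_val_min hWn hminW])
  funext x
  exact main (rk x + 1) x (Nat.lt_succ_self _)


lemma dst_fix {T : Cells lam → Fin n} (hqy : IsQY T) : dstAux T = T := by
  rw [dstAux, dif_neg (normal_iff_qy.mpr hqy)]

end Main

/-- the destandardization map on semistandard Young tableaux is well defined
(every tableau reaches a unique tableau to which no decrement step applies), lands in the
quasi-Yamanouchi tableaux, fixes exactly the quasi-Yamanouchi tableaux, is surjective,
and is injective iff `n ≤ ℓ(λ)`. -/
theorem tableau_destandardization (n : ℕ) (lam : List ℕ) (hne : lam ≠ [])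
    (hpos : ∀ x ∈ lam, 0 < x) (hsort : List.Pairwise (· ≥ ·) lam) :
    ∃ dst : {T : Cells lam → Fin n // IsSSYT T} → {T : Cells lam → Fin n // IsSSYT T},
      (∀ T, Relation.ReflTransGen TabStep T.val (dst T).val) ∧
      (∀ T, ¬ ∃ U : Cells lam → Fin n, TabStep (dst T).val U) ∧
      (∀ T, ∀ U : Cells lam → Fin n, Relation.ReflTransGen TabStep T.val U →
        (¬ ∃ U' : Cells lam → Fin n, TabStep U U') → U = (dst T).val) ∧
      (∀ T, IsQY (dst T).val) ∧
      (∀ T, dst T = T ↔ IsQY T.val) ∧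
      (∀ Q : {T : Cells lam → Fin n // IsSSYT T}, IsQY Q.val → ∃ T, dst T = Q) ∧
      (Function.Injective dst ↔ n ≤ lam.length) := by
  classical
  have pos0 : ∀ r : Fin lam.length, 0 < lam.get r := fun r => hpos _ (lam.get_mem r)
  have hL : 0 < lam.length := List.length_pos_iff.mpr hne
  refine ⟨fun T => ⟨dstAux T.val, reach_ssyt T.prop (dst_reaches T.val)⟩,
    fun T => dst_reaches T.val, fun T => dst_normal T.val, ?_, 
    fun T => normal_iff_qy.mp (dst_normal T.val), ?_, ?_, ?_⟩
  · -- uniqueness of normal forms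
    intro T U hreach hUn
    exact normal_unique hsort (reach_ssyt T.prop hreach)
      (reach_ssyt T.prop (dst_reaches T.val)) hUn (dst_normal T.val)
      (fun x y => by rw [rtg_keyLt hreach, rtg_keyLt (dst_reaches T.val)])
  · -- fixed points are exactly the QY tableaux
    intro T
    constructor
    · intro h
      have : IsQY (dstAux T.val) := normal_iff_qy.mp (dst_normal T.val)
      rwa [show dstAux T.val = T.val from congrArg Subtype.val h] at this
    · intro hqy
      exact Subtype.ext (dst_fix hqy)
  · -- surjectivity
    intro Q hqy
    exact ⟨Q, Subtype.ext (dst_fix hqy)⟩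
  · -- injectivity iff n ≤ ℓ(λ)
    constructor
    · -- injective → n ≤ ℓ(λ)
      intro hinj
      by_contra hln
      push_neg at hln
      set L := lam.length with hLdef
      -- two tableaux with the same destandardization
      set T0 : Cells lam → Fin n := fun x => ⟨(x.1 : ℕ), lt_trans x.1.isLt hln⟩ with hT0def
      set T1 : Cells lam → Fin n :=
        fun x => if (x.1 : ℕ) = L - 1 then ⟨L, hln⟩ else ⟨(x.1 : ℕ), lt_trans x.1.isLt hln⟩
        with hT1def
      have hT0 : IsSSYT T0 := by
        constructor
        · intro r c c' _; exact le_rfl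
        · intro r r' c' h hrr
          simp only [hT0def, Fin.lt_def]
          exact hrr
      have hT1 : IsSSYT T1 := by
        constructor
        · intro r c c' _; exact le_rfl
        · intro r r' c' h hrr
          have h1 : (r : ℕ) < L := r.isLt
          have h2 : (r' : ℕ) < L := r'.isLt
          simp only [hT1def, Fin.lt_def]
          split_ifs <;> simp <;> omega
      have hQY0 : IsQY T0 := by
        intro v x hx hv0 hleft
        have hval : (x.1 : ℕ) = (v : ℕ) := by rw [← hx]
        have hx1 : 0 < (x.1 : ℕ) := by omega
        have hr' : (x.1 : ℕ) - 1 < L := by omega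
        have hlen : lam.get x.1 ≤ lam.get ⟨(x.1 : ℕ) - 1, hr'⟩ :=
          List.Pairwise.rel_get_of_lt hsort (by simp [Fin.lt_def]; omega)
        have hc : (x.2 : ℕ) < lam.get ⟨(x.1 : ℕ) - 1, hr'⟩ := lt_of_lt_of_le x.2.isLt hlen
        refine ⟨⟨⟨(x.1 : ℕ) - 1, hr'⟩, ⟨(x.2 : ℕ), hc⟩⟩, ?_, le_rfl⟩
        simp only [hT0def]
        omega
      have hstep : TabStep T1 T0 := by
        refine ⟨⟨L, hln⟩, hL, ⟨⟨⟨L - 1, by omega⟩, ⟨0, pos0 _⟩⟩, ?_⟩, ?_, ?_⟩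
        · simp [hT1def]
        · intro z w hz hw
          exfalso
          simp only [hT1def] at hw
          split_ifs at hw <;> simp_all <;> omega
        · intro x
          by_cases hx1 : (x.1 : ℕ) = L - 1
          · rw [if_pos (by simp [hT1def, hx1])]
            simp only [hT0def]
            omega
          · rw [if_neg ?_]
            · simp [hT0def, hT1def, hx1]
            · intro hcon
              apply hx1
              have := congrArg Fin.val hcon
              simp only [hT1def, if_neg hx1] at this
              simp at this
              omega
      have hne01 : T0 ≠ T1 := by
        intro hcon
        have := congrArg (fun f => (f ⟨⟨L - 1, by omega⟩, ⟨0, pos0 _⟩⟩ : Fin n).val) hcon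
        simp only [hT0def, hT1def] at this
        simp at this
        omega
      have hd1 : dstAux T1 = T0 := by
        refine normal_unique hsort (reach_ssyt hT1 (dst_reaches T1)) hT0
          (dst_normal T1) (normal_iff_qy.mpr hQY0) ?_
        intro x y
        rw [rtg_keyLt (dst_reaches T1), ← tabStep_keyLt hstep]
      have := hinj (a₁ := ⟨T1, hT1⟩) (a₂ := ⟨T0, hT0⟩)
        (by apply Subtype.ext; simp only; rw [hd1, dst_fix hQY0])
      exact hne01 (congrArg Subtype.val this).symm
    · -- n ≤ ℓ(λ) → injective
      intro hnl
      have everyQY : ∀ T : Cells lam → Fin n, IsSSYT T → IsQY T := by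
        intro T hT
        set f : Fin lam.length → Fin n := fun r => T ⟨r, ⟨0, pos0 r⟩⟩ with hfdef
        have hmono : StrictMono f := by
          intro r r' hrr
          exact hT.2 r r' ⟨0, pos0 r'⟩ (pos0 r) hrr
        have hinjf : Function.Injective f := hmono.injective
        have hcard : lam.length ≤ n := by
          have := Fintype.card_le_of_injective f hinjf
          simpa using this
        have hsurj : Function.Surjective f := by
          have : Function.Bijective f := (Fintype.bijective_iff_injective_and_card f).mpr
            ⟨hinjf, by simp; omega⟩
          exact this.2
        intro v x hx hv0 hleft
        obtain ⟨r, hr⟩ := hsurj v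
        have hx0 : (x.2 : ℕ) = 0 := by
          have h := hleft ⟨r, ⟨0, pos0 r⟩⟩ hr
          simp only [] at h
          omega
        obtain ⟨r', hr'⟩ := hsurj ⟨(v : ℕ) - 1, by omega⟩
        refine ⟨⟨r', ⟨0, pos0 r'⟩⟩, ?_, by omega⟩
        rw [show T ⟨r', ⟨0, pos0 r'⟩⟩ = ⟨(v : ℕ) - 1, by omega⟩ from hr']
        simp
        omega
      intro T U heq
      have h1 : dstAux T.val = T.val := dst_fix (everyQY T.val T.prop)
      have h2 : dstAux U.val = U.val := dst_fix (everyQY U.val U.prop)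
      have := congrArg Subtype.val heq
      simp only at this
      rw [h1, h2] at this
      exact Subtype.ext this

end SlidePaper
end

section
/- For strong compositions α and β and every n ≥ 1, the monomial quasisymmetric polynomials satisfy M_α(x_1,…,x_n) · M_β(x_1,…,x_n) = Σ_γ [γ | α ⧺ β] M_γ(x_1,…,x_n), where [γ | α ⧺ β] is the multiplicity of γ in the quasi-shuffle product α ⧺ β. -/
open scoped Classical

namespace SlidePaper

-- Auxiliary lemmas for Statement 15
noncomputable def Mq (n k m : ℕ) (g : Fin m → ℕ) : MvPolynomial (Fin n) ℤ :=
  ∑ i ∈ (Finset.univ : Finset (Fin m → Fin n)).filter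
      (fun i : Fin m → Fin n => StrictMono i ∧ ∀ t, (i t : ℕ) < k),
    ∏ t, (MvPolynomial.X (i t) : MvPolynomial (Fin n) ℤ) ^ g t

lemma Mqs_eq_Mq (n k : ℕ) (α : List ℕ) : Mqs n k α = Mq n k α.length α.get := rfl

lemma Mq_congr (n k : ℕ) {m m' : ℕ} (h : m = m') (g : Fin m → ℕ) (g' : Fin m' → ℕ)
    (hg : ∀ t : Fin m, g t = g' (Fin.cast h t)) : Mq n k m g = Mq n k m' g' := by
  subst h
  have : g = g' := funext fun t => hg t
  rw [this]

lemma Mq_zero_len (n k : ℕ) (g : Fin 0 → ℕ) : Mq n k 0 g = 1 := by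
  rw [Mq]
  rw [Finset.filter_true_of_mem (fun i _ => ⟨fun s t hst => absurd hst (by exact (Fin.elim0 s)),
      fun t => Fin.elim0 t⟩)]
  simp

lemma Mq_k_zero (n : ℕ) {m : ℕ} (g : Fin (m+1) → ℕ) : Mq n 0 (m+1) g = 0 := by
  rw [Mq]
  rw [Finset.filter_false_of_mem, Finset.sum_empty]
  rintro i - ⟨-, h2⟩
  exact Nat.not_lt_zero _ (h2 0)



lemma strictMono_snoc {m n : ℕ} (j : Fin m → Fin n) (x : Fin n) (hj : StrictMono j)
    (hx : ∀ t, j t < x) : StrictMono (Fin.snoc j x) := by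
  intro s t hst
  induction t using Fin.lastCases with
  | last =>
    have hs : s ≠ Fin.last m := Fin.ne_last_of_lt hst
    obtain ⟨s', rfl⟩ := Fin.exists_castSucc_eq.mpr hs
    simpa using hx s'
  | cast t' =>
    have hs : s ≠ Fin.last m := Fin.ne_last_of_lt (lt_trans hst (Fin.castSucc_lt_last t'))
    obtain ⟨s', rfl⟩ := Fin.exists_castSucc_eq.mpr hs
    have : s' < t' := by exact_mod_cast hst
    simpa using hj this

lemma Mq_succ (n k m : ℕ) (hk : k < n) (g : Fin (m+1) → ℕ) :
    Mq n (k+1) (m+1) g = Mq n k (m+1) g +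
      Mq n k m (fun t => g t.castSucc) *
        MvPolynomial.X (⟨k, hk⟩ : Fin n) ^ g (Fin.last m) := by
  rw [Mq]
  rw [← Finset.sum_filter_add_sum_filter_not _ (fun i => (i (Fin.last m) : ℕ) < k)]
  congr 1
  · rw [Mq, Finset.filter_filter]
    apply Finset.sum_congr _ (fun _ _ => rfl)
    apply Finset.filter_congr
    intro i _
    constructor
    · rintro ⟨⟨h1, h2⟩, h3⟩
      refine ⟨h1, fun t => ?_⟩
      exact lt_of_le_of_lt (by exact_mod_cast h1.monotone (Fin.le_last t)) h3
    · rintro ⟨h1, h2⟩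
      exact ⟨⟨h1, fun t => Nat.lt_succ_of_lt (h2 t)⟩, h2 (Fin.last m)⟩
  · rw [Mq, Finset.sum_mul]
    apply Finset.sum_nbij' (i := fun i (t : Fin m) => i t.castSucc)
      (j := fun j => Fin.snoc j (⟨k, hk⟩ : Fin n))
    · intro i hi
      simp only [Finset.mem_filter, Finset.mem_univ, true_and, not_lt] at hi ⊢
      obtain ⟨⟨h1, h2⟩, h3⟩ := hi
      refine ⟨fun s t hst => h1 (by exact_mod_cast hst), fun t => ?_⟩
      have : i t.castSucc < i (Fin.last m) := h1 (Fin.castSucc_lt_last t)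
      have h4 : (i (Fin.last m) : ℕ) = k := le_antisymm (Nat.lt_succ_iff.mp (h2 _)) h3
      omega
    · intro j hj
      simp only [Finset.mem_filter, Finset.mem_univ, true_and, not_lt] at hj ⊢
      obtain ⟨h1, h2⟩ := hj
      have hlt : ∀ t, j t < (⟨k, hk⟩ : Fin n) := fun t => by
        have := h2 t; exact (Fin.lt_def).mpr (by simpa using this)
      refine ⟨⟨strictMono_snoc j _ h1 hlt, fun t => ?_⟩, ?_⟩
      · induction t using Fin.lastCases with
        | last => simp
        | cast t' => simp only [Fin.snoc_castSucc]; exact Nat.lt_succ_of_lt (h2 t')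
      · simp
    · intro i hi
      simp only [Finset.mem_filter, Finset.mem_univ, true_and, not_lt] at hi
      obtain ⟨⟨h1, h2⟩, h3⟩ := hi
      have h4 : i (Fin.last m) = (⟨k, hk⟩ : Fin n) :=
        Fin.ext (le_antisymm (Nat.lt_succ_iff.mp (h2 _)) h3)
      funext t
      induction t using Fin.lastCases with
      | last => simpa using h4.symm
      | cast t' => simp
    · intro j hj
      funext t
      simp
    · intro i hi
      simp only [Finset.mem_filter, Finset.mem_univ, true_and, not_lt] at hi
      obtain ⟨⟨h1, h2⟩, h3⟩ := hi
      have h4 : i (Fin.last m) = (⟨k, hk⟩ : Fin n) :=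
        Fin.ext (le_antisymm (Nat.lt_succ_iff.mp (h2 _)) h3)
      rw [Fin.prod_univ_castSucc, h4]



lemma Mqs_concat_eq (n K : ℕ) (δ : List ℕ) (c : ℕ) :
    Mqs n K (δ ++ [c]) = Mq n K (δ.length + 1) (Fin.snoc δ.get c) := by
  have hlen : (δ ++ [c]).length = δ.length + 1 := by simp
  rw [Mqs_eq_Mq]
  apply Mq_congr n K hlen
  intro t
  rcases Nat.lt_or_ge (t : ℕ) δ.length with h | h
  · have : Fin.cast hlen t = Fin.castSucc ⟨(t : ℕ), h⟩ := by ext; simp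
    rw [this, Fin.snoc_castSucc, List.get_eq_getElem, List.get_eq_getElem,
      List.getElem_append_left]
  · have ht : (t : ℕ) = δ.length := by have := t.isLt; omega
    have : Fin.cast hlen t = Fin.last δ.length := by ext; simpa using ht
    rw [this, Fin.snoc_last, List.get_eq_getElem]
    simp [List.getElem_append_right, ht]

lemma Mqs_nil (n k : ℕ) : Mqs n k [] = 1 := Mq_zero_len n k _

lemma Mqs_zero (n : ℕ) (γ : List ℕ) (hγ : γ ≠ []) : Mqs n 0 γ = 0 := by
  cases γ with
  | nil => exact absurd rfl hγ
  | cons x γ₀ => exact Mq_k_zero n _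

lemma Mqs_succ (n k : ℕ) (hk : k < n) (δ : List ℕ) (c : ℕ) :
    Mqs n (k+1) (δ ++ [c]) = Mqs n k (δ ++ [c]) +
      Mqs n k δ * MvPolynomial.X (⟨k, hk⟩ : Fin n) ^ c := by
  rw [Mqs_concat_eq, Mqs_concat_eq, Mq_succ n k δ.length hk]
  congr 1
  simp only [Fin.snoc_castSucc, Fin.snoc_last]
  rfl




lemma qShuffle_nil_left (β : List ℕ) : qShuffle [] β = {β} := by simp [qShuffle]

lemma qShuffle_nil_right (α : List ℕ) : qShuffle α [] = {α} := by cases α <;> simp [qShuffle]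

lemma qShuffle_cons_cons (a b : ℕ) (α β : List ℕ) :
    qShuffle (a :: α) (b :: β) =
      ((qShuffle α (b :: β)).map (a :: ·)) + ((qShuffle (a :: α) β).map (b :: ·)) +
        ((qShuffle α β).map ((a + b) :: ·)) := by rw [qShuffle]

lemma qShuffle_concat_aux (a b : ℕ) :
    ∀ (N : ℕ) (α β : List ℕ), α.length + β.length ≤ N →
    qShuffle (α ++ [a]) (β ++ [b]) =
      ((qShuffle α (β ++ [b])).map (· ++ [a])) + ((qShuffle (α ++ [a]) β).map (· ++ [b])) +
        ((qShuffle α β).map (· ++ [a + b])) := by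
  intro N
  induction N with
  | zero =>
    rintro α β h
    have hα : α = [] := List.length_eq_zero_iff.mp (by omega)
    have hβ : β = [] := List.length_eq_zero_iff.mp (by omega)
    subst hα; subst hβ
    simp only [List.nil_append, qShuffle_cons_cons, qShuffle_nil_left, qShuffle_nil_right,
      Multiset.map_singleton, List.cons_append]
    abel
  | succ N IH =>
    rintro α β h
    match α, β with
    | [], [] =>
      simp only [List.nil_append, qShuffle_cons_cons, qShuffle_nil_left, qShuffle_nil_right,
        Multiset.map_singleton, List.cons_append]
      abel
    | [], b' :: β₀ =>
      have ih := IH [] β₀ (by simp at h ⊢; omega)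
      simp only [List.nil_append, qShuffle_nil_left, Multiset.map_singleton] at ih
      simp only [List.nil_append, List.cons_append, qShuffle_cons_cons, qShuffle_nil_left,
        qShuffle_nil_right, Multiset.map_singleton]
      rw [ih]
      simp only [Multiset.map_add, Multiset.map_map, Function.comp, Multiset.map_singleton,
        List.cons_append]
      abel
    | a' :: α₀, [] =>
      have ih := IH α₀ [] (by simp at h ⊢; omega)
      simp only [List.nil_append, qShuffle_nil_right, Multiset.map_singleton] at ih
      simp only [List.nil_append, List.cons_append, qShuffle_cons_cons, qShuffle_nil_left,
        qShuffle_nil_right, Multiset.map_singleton]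
      rw [ih]
      simp only [Multiset.map_add, Multiset.map_map, Function.comp, Multiset.map_singleton,
        List.cons_append]
      abel
    | a' :: α₀, b' :: β₀ =>
      have ih1 := IH α₀ (b' :: β₀) (by simp at h ⊢; omega)
      have ih2 := IH (a' :: α₀) β₀ (by simp at h ⊢; omega)
      have ih3 := IH α₀ β₀ (by simp at h ⊢; omega)
      simp only [List.cons_append] at ih1 ih2 ih3 ⊢
      simp only [qShuffle_cons_cons, qShuffle_nil_left, qShuffle_nil_right]
      rw [ih1, ih2, ih3]
      simp only [Multiset.map_add, Multiset.map_map, Function.comp, Multiset.map_singleton,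
        List.cons_append]
      abel

lemma qShuffle_concat (a b : ℕ) (α β : List ℕ) :
    qShuffle (α ++ [a]) (β ++ [b]) =
      ((qShuffle α (β ++ [b])).map (· ++ [a])) + ((qShuffle (α ++ [a]) β).map (· ++ [b])) +
        ((qShuffle α β).map (· ++ [a + b])) :=
  qShuffle_concat_aux a b (α.length + β.length) α β le_rfl



lemma qShuffle_ne_nil (a b : ℕ) (α β : List ℕ) : ∀ γ ∈ qShuffle (a :: α) (b :: β), γ ≠ [] := by
  intro γ hγ
  rw [qShuffle_cons_cons] at hγ
  simp only [Multiset.mem_add, Multiset.mem_map] at hγ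
  rcases hγ with (⟨δ, -, rfl⟩ | ⟨δ, -, rfl⟩) | ⟨δ, -, rfl⟩ <;> simp

lemma main_aux (n : ℕ) : ∀ k : ℕ, k ≤ n → ∀ α β : List ℕ,
    Mqs n k α * Mqs n k β = ((qShuffle α β).map (fun γ => Mqs n k γ)).sum := by
  intro k
  induction k with
  | zero =>
    intro _ α β
    match α, β with
    | [], β => simp [Mqs_nil, qShuffle_nil_left]
    | a :: α, [] => simp [Mqs_nil, qShuffle_nil_right]
    | a :: α, b :: β =>
      rw [Mqs_zero n _ (by simp), zero_mul]
      symm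
      apply Multiset.sum_eq_zero
      intro y hy
      rw [Multiset.mem_map] at hy
      obtain ⟨γ, hγ, rfl⟩ := hy
      exact Mqs_zero n γ (qShuffle_ne_nil a b α β γ hγ)
  | succ k IH =>
    intro hk α β
    have hkn : k < n := hk
    have IH' := IH (le_of_lt hkn)
    rcases List.eq_nil_or_concat α with rfl | ⟨α', a, rfl⟩
    · simp [Mqs_nil, qShuffle_nil_left]
    rcases List.eq_nil_or_concat β with rfl | ⟨β', b, rfl⟩
    · simp [Mqs_nil, qShuffle_nil_right]
    simp only [List.concat_eq_append]
    have e1 := IH' (α' ++ [a]) (β' ++ [b])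
    rw [qShuffle_concat] at e1
    simp only [Multiset.map_add, Multiset.sum_add, Multiset.map_map, Function.comp] at e1
    have e2 := IH' α' (β' ++ [b])
    have e3 := IH' (α' ++ [a]) β'
    have e4 := IH' α' β'
    rw [qShuffle_concat]
    simp only [Multiset.map_add, Multiset.sum_add, Multiset.map_map, Function.comp]
    simp only [Mqs_succ n k hkn]
    simp only [Multiset.sum_map_add, Multiset.sum_map_mul_right]
    linear_combination e1 + e2 * MvPolynomial.X (⟨k, hkn⟩ : Fin n) ^ a +
      e3 * MvPolynomial.X (⟨k, hkn⟩ : Fin n) ^ b +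
      e4 * (MvPolynomial.X (⟨k, hkn⟩ : Fin n) ^ a * MvPolynomial.X (⟨k, hkn⟩ : Fin n) ^ b)

/-- the monomial quasisymmetric polynomials multiply by the quasi-shuffle
product: `M_α · M_β = Σ_γ [γ ∣ α ⧺ β] M_γ`. -/
theorem monomialQsym_mul_quasiShuffle (α β : List ℕ) (hα : ∀ x ∈ α, 0 < x)
    (hβ : ∀ x ∈ β, 0 < x) (n : ℕ) (hn : 1 ≤ n) :
    Mqs n n α * Mqs n n β = ((qShuffle α β).map (fun γ => Mqs n n γ)).sum :=
  main_aux n n le_rfl α β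

end SlidePaper
end
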